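/- Let S : X_d → X be the synthesis operator and R̃ : X → X_d the analysis operator of a cross-frame, satisfying S R̃ = I_X and R̃ S = I_{X_d} − P where P is a bounded projection onto N = Ker S. For any bounded operator B : X → X, the set of bounded operators A : X_d → X_d with SA = BS is exactly {R̃BS + A₀ : A₀ bounded with A₀(X_d) ⊆ N}. -/
import Mathlib

/-- Theorem 10 of the paper: Let S : W → X and R̃ : X → W be the
synthesis and analysis operators of a cross-frame, with S R̃ = I_X. For any bounded
B : X → X, the bounded operators A : W → W with SA = BS are exactly those of
the form A = R̃BS + A₀ where A₀ is bounded with range contained in Ker S. -/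
theorem stmt14 {W X : Type*} [NormedAddCommGroup W] [NormedSpace ℂ W] [CompleteSpace W]
    [NormedAddCommGroup X] [NormedSpace ℂ X] [CompleteSpace X]
    (S : W →L[ℂ] X) (Rt : X →L[ℂ] W)
    (hSR : ∀ v : X, S (Rt v) = v)
    (B : X →L[ℂ] X) :
    ∀ A : W →L[ℂ] W,
      S.comp A = B.comp S ↔
      ∃ A₀ : W →L[ℂ] W, (∀ a : W, S (A₀ a) = 0) ∧
        A = (Rt.comp B).comp S + A₀ := by
  intro A
  constructor
  · intro h
    refine ⟨A - (Rt.comp B).comp S, fun a => ?_, by abel⟩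
    have hA : S (A a) = B (S a) := congrFun (congrArg DFunLike.coe h) a
    simp [hA, hSR]
  · rintro ⟨A₀, h0, rfl⟩
    ext a
    simp [h0, hSR]
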